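/- arXiv:math/9908146 — 3 statements merged into one kernel-verified Lean document; each statement's English description precedes it below -/
import Mathlib

section
/- For every integer n >= 1 and every real (or complex) number b, the sum over k from 0 to n of (-n)_k (b)_k (b+2k) / (Gamma(b+n+k+1) k!) equals 0. -/
noncomputable def poch (a : ℝ) (k : ℕ) : ℝ := ∏ m ∈ Finset.range k, (a + m)

noncomputable def lag (α : ℝ) (n : ℕ) (x : ℝ) : ℝ :=
  ∑ k ∈ Finset.range (n + 1),
    (-1) ^ k * (poch (α + k + 1) (n - k) / (n - k).factorial) * x ^ k / k.factorial

noncomputable def jacobi (α β : ℝ) (n : ℕ) (x : ℝ) : ℝ :=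
  ∑ k ∈ Finset.range (n + 1),
    poch ((n : ℝ) + α + β + 1) k * poch (α + k + 1) (n - k) /
      (k.factorial * (n - k).factorial) * ((x - 1) / 2) ^ k

noncomputable def charlier (a : ℝ) (n : ℕ) (x : ℝ) : ℝ :=
  ∑ m ∈ Finset.range (n + 1),
    (∏ j ∈ Finset.range m, (x - (j : ℝ))) / m.factorial * (-a) ^ (n - m) / (n - m).factorial

lemma inv_gamma_rec (x : ℝ) : (Real.Gamma x)⁻¹ = x * (Real.Gamma (x + 1))⁻¹ := by
  by_cases hx : x = 0
  · simp [hx, Real.Gamma_zero]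
  · rw [Real.Gamma_add_one hx, mul_inv, ← mul_assoc, mul_inv_cancel₀ hx, one_mul]

lemma poch_succ (a : ℝ) (k : ℕ) : poch a (k + 1) = poch a k * (a + k) := by
  simp [poch, Finset.prod_range_succ]

theorem stmt1 (n : ℕ) (hn : 1 ≤ n) (b : ℝ) :
    ∑ k ∈ Finset.range (n + 1),
      poch (-(n : ℝ)) k * poch b k * (b + 2 * k) *
        (Real.Gamma (b + n + k + 1))⁻¹ / k.factorial = 0 := by
  have hn0 : (n : ℝ) ≠ 0 := Nat.cast_ne_zero.mpr (by omega)
  set G : ℕ → ℝ := fun m =>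
    -(m * poch (-(n : ℝ)) m * poch b m / (n * m.factorial)) *
      (Real.Gamma (b + n + m))⁻¹ with hG
  have key : ∀ k ∈ Finset.range (n + 1),
      poch (-(n : ℝ)) k * poch b k * (b + 2 * k) *
        (Real.Gamma (b + n + k + 1))⁻¹ / k.factorial = G (k + 1) - G k := by
    intro k _
    have h1 : (Real.Gamma (b + n + k))⁻¹
        = (b + n + k) * (Real.Gamma (b + n + k + 1))⁻¹ := inv_gamma_rec _
    have h2 : (b + (n : ℝ) + ((k : ℕ) + 1 : ℕ)) = b + n + k + 1 := by push_cast; ring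
    have hfac : ((k.factorial : ℝ)) ≠ 0 := Nat.cast_ne_zero.mpr k.factorial_ne_zero
    simp only [hG, h2, h1, poch_succ, Nat.factorial_succ]
    generalize (Real.Gamma (b + ↑n + ↑k + 1))⁻¹ = I
    push_cast
    field_simp
    ring
  rw [Finset.sum_congr rfl key, Finset.sum_range_sub]
  have hz : poch (-(n : ℝ)) (n + 1) = 0 := by
    apply Finset.prod_eq_zero (Finset.self_mem_range_succ n)
    simp
  simp [hG, hz]
end

section
/- The monomial x^n / n! equals the sum over k from 0 to n of (-1)^k binomial(n+alpha, n-k) L_k^{(alpha)}(x), where L_k^{(alpha)} is the classical Laguerre polynomial. -/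
lemma poch_add (a : ℝ) (p q : ℕ) : poch a (p + q) = poch a p * poch (a + p) q := by
  unfold poch
  rw [Finset.prod_range_add]
  congr 1
  apply Finset.prod_congr rfl
  intro m _
  push_cast
  ring

lemma alt_choose (m : ℕ) :
    ∑ i ∈ Finset.range (m + 1), (-1 : ℝ) ^ i * (m.choose i) = if m = 0 then 1 else 0 := by
  have h := congrArg (fun z : ℤ => (z : ℝ)) (Int.alternating_sum_range_choose (n := m))
  push_cast at h
  simpa using h

lemma alt (m : ℕ) :
    ∑ i ∈ Finset.range (m + 1), (-1 : ℝ) ^ i / (i.factorial * (m - i).factorial)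
      = (if m = 0 then (1 : ℝ) else 0) / m.factorial := by
  have key : ∀ i ∈ Finset.range (m + 1),
      (-1 : ℝ) ^ i / (i.factorial * (m - i).factorial)
        = (-1 : ℝ) ^ i * (m.choose i) / m.factorial := by
    intro i hi
    have hi' : i ≤ m := Nat.lt_succ_iff.mp (Finset.mem_range.mp hi)
    have h' : ((m.choose i : ℝ)) * i.factorial * (m - i).factorial = m.factorial := by
      exact_mod_cast congrArg (Nat.cast : ℕ → ℝ) (Nat.choose_mul_factorial_mul_factorial hi')
    have d1 : ((i.factorial : ℝ)) ≠ 0 := Nat.cast_ne_zero.mpr i.factorial_ne_zero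
    have d2 : (((m - i).factorial : ℝ)) ≠ 0 := Nat.cast_ne_zero.mpr (m - i).factorial_ne_zero
    have d3 : ((m.factorial : ℝ)) ≠ 0 := Nat.cast_ne_zero.mpr m.factorial_ne_zero
    rw [div_eq_div_iff (by positivity) d3]
    linear_combination (-(-1 : ℝ) ^ i) * h'
  rw [Finset.sum_congr rfl key, ← Finset.sum_div, alt_choose]

theorem stmt3 (α x : ℝ) (n : ℕ) :
    x ^ n / n.factorial =
      ∑ k ∈ Finset.range (n + 1),
        (-1) ^ k * (poch (α + k + 1) (n - k) / (n - k).factorial) * lag α k x := by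
  unfold lag
  symm
  calc ∑ k ∈ Finset.range (n + 1), (-1 : ℝ) ^ k * (poch (α + k + 1) (n - k) / (n - k).factorial) *
        ∑ j ∈ Finset.range (k + 1),
          (-1 : ℝ) ^ j * (poch (α + j + 1) (k - j) / (k - j).factorial) * x ^ j / j.factorial
      = ∑ k ∈ Finset.range (n + 1), ∑ j ∈ Finset.range (n + 1),
          (if j ≤ k then
            (-1 : ℝ) ^ k * (poch (α + k + 1) (n - k) / (n - k).factorial) *
              ((-1 : ℝ) ^ j * (poch (α + j + 1) (k - j) / (k - j).factorial) * x ^ j / j.factorial)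
          else 0) := by
        apply Finset.sum_congr rfl
        intro k hk
        rw [Finset.mul_sum, ← Finset.sum_filter]
        apply Finset.sum_congr
        · ext j
          simp only [Finset.mem_filter, Finset.mem_range]
          have := Finset.mem_range.mp hk
          omega
        · intro j _; rfl
    _ = ∑ j ∈ Finset.range (n + 1), ∑ k ∈ Finset.range (n + 1),
          (if j ≤ k then
            (-1 : ℝ) ^ k * (poch (α + k + 1) (n - k) / (n - k).factorial) *
              ((-1 : ℝ) ^ j * (poch (α + j + 1) (k - j) / (k - j).factorial) * x ^ j / j.factorial)
          else 0) := Finset.sum_comm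
    _ = ∑ j ∈ Finset.range (n + 1), (if j = n then x ^ n / n.factorial else 0) := by
        apply Finset.sum_congr rfl
        intro j hj
        have hjn : j ≤ n := Nat.lt_succ_iff.mp (Finset.mem_range.mp hj)
        set m := n - j with hm
        have hnm : n = j + m := by omega
        rw [← Finset.sum_filter]
        have hfil : (Finset.range (n + 1)).filter (fun k => j ≤ k) = Finset.Ico j (n + 1) := by
          ext k; simp [Finset.mem_filter, Finset.mem_range, Finset.mem_Ico]; omega
        rw [hfil, Finset.sum_Ico_eq_sum_range]
        have hr : n + 1 - j = m + 1 := by omega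
        rw [hr]
        have key : ∀ i ∈ Finset.range (m + 1),
            (-1 : ℝ) ^ (j + i) * (poch (α + ↑(j + i) + 1) (n - (j + i)) / (n - (j + i)).factorial) *
              ((-1 : ℝ) ^ j * (poch (α + j + 1) ((j + i) - j) / ((j + i) - j).factorial) * x ^ j / j.factorial)
            = poch (α + j + 1) m * (x ^ j / j.factorial) *
                ((-1 : ℝ) ^ i / (i.factorial * (m - i).factorial)) := by
          intro i hi
          have him : i ≤ m := Nat.lt_succ_iff.mp (Finset.mem_range.mp hi)
          have h1 : (j + i) - j = i := by omega
          have h2 : n - (j + i) = m - i := by omega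
          have h3 : poch (α + j + 1) i * poch (α + ↑(j + i) + 1) (m - i) = poch (α + j + 1) m := by
            have e : poch (α + ↑(j + i) + 1) (m - i) = poch ((α + j + 1) + i) (m - i) := by
              congr 1
              push_cast
              ring
            rw [e, ← poch_add, Nat.add_sub_cancel' him]
          rw [h1, h2, ← h3, pow_add]
          rcases Nat.even_or_odd j with he | ho
          · rw [he.neg_one_pow]
            field_simp
          · rw [ho.neg_one_pow]
            field_simp
        rw [Finset.sum_congr rfl key, ← Finset.mul_sum, alt]
        by_cases hjn' : j = n
        · subst hjn'
          have : m = 0 := by omega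
          simp [this, poch]
        · have : m ≠ 0 := by omega
          simp [this, hjn']
    _ = x ^ n / n.factorial := by
        rw [Finset.sum_ite_eq' (Finset.range (n + 1)) n]
        simp
end

section
/- For every integer n >= 2, (alpha+1) P_n^{(alpha+1,alpha+1)}(x) - (n+alpha+1) P_n^{(alpha,alpha)}(x) = (1/4)(n+alpha+1)(1-x^2) P_{n-2}^{(alpha+2,alpha+2)}(x). -/
lemma poch_zero (a : ℝ) : poch a 0 = 1 := by simp [poch]

lemma poch_one_eq (a : ℝ) : poch a 1 = a := by simp [poch]

lemma poch_s (a : ℝ) (k : ℕ) : poch a (k+1) = poch a k * (a + k) := by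
  unfold poch; rw [Finset.prod_range_succ]

lemma poch_s' (a : ℝ) (k : ℕ) : poch a (k+1) = a * poch (a+1) k := by
  unfold poch
  rw [Finset.prod_range_succ']
  rw [Finset.prod_congr rfl (fun i _ => by push_cast; ring :
    ∀ i ∈ Finset.range k, a + ((i+1 : ℕ) : ℝ) = (a+1) + (i : ℝ))]
  push_cast; ring

lemma poch_two (a : ℝ) (i : ℕ) : poch a (i+1+1) = poch a i * (a+i) * (a+i+1) := by
  rw [poch_s, poch_s]; push_cast; ring

lemma poch_tr (a : ℝ) (u : ℕ) : poch a (u+1+1) = a * (poch (a+1) u * (a+1+u)) := by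
  rw [poch_s, poch_s']; push_cast; ring

lemma poch_tl (a : ℝ) (u : ℕ) : poch a (u+1+1) = a * ((a+1) * poch (a+1+1) u) := by
  rw [poch_s', poch_s']

lemma factc (i : ℕ) : (((i+1).factorial : ℕ) : ℝ) = ((i : ℝ)+1) * ((i.factorial : ℕ) : ℝ) := by
  rw [Nat.factorial_succ]; push_cast; ring

noncomputable def Aco (α : ℝ) (m k : ℕ) : ℝ :=
  poch ((m : ℝ) + 2*α + 5) k * poch (α + k + 2) (m+2-k) /
    ((k.factorial : ℝ) * ((m+2-k).factorial : ℝ))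

noncomputable def Bco (α : ℝ) (m k : ℕ) : ℝ :=
  poch ((m : ℝ) + 2*α + 3) k * poch (α + k + 1) (m+2-k) /
    ((k.factorial : ℝ) * ((m+2-k).factorial : ℝ))

noncomputable def Cco (α : ℝ) (m j : ℕ) : ℝ :=
  poch ((m : ℝ) + 2*α + 5) j * poch (α + j + 3) (m-j) /
    ((j.factorial : ℝ) * ((m-j).factorial : ℝ))

set_option maxHeartbeats 2000000 in
theorem stmt9 (α x : ℝ) (n : ℕ) (hn : 2 ≤ n) :
    (α + 1) * jacobi (α + 1) (α + 1) n x - (n + α + 1) * jacobi α α n x =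
      (1 / 4) * (n + α + 1) * (1 - x ^ 2) * jacobi (α + 2) (α + 2) (n - 2) x := by
  obtain ⟨m, rfl⟩ : ∃ m, n = m + 2 := ⟨n - 2, by omega⟩
  rw [show m + 2 - 2 = m from rfl]
  have hA : jacobi (α+1) (α+1) (m+2) x
      = ∑ k ∈ Finset.range (m+1+1+1), Aco α m k * ((x-1)/2) ^ k := by
    unfold jacobi Aco
    refine Finset.sum_congr (by rw [show m+2+1 = m+1+1+1 by omega]) fun k _ => ?_
    rw [show ((m+2 : ℕ) : ℝ) + (α+1) + (α+1) + 1 = (m : ℝ) + 2*α + 5 by push_cast; ring,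
        show α + 1 + (k : ℝ) + 1 = α + (k : ℝ) + 2 by ring]
  have hB : jacobi α α (m+2) x
      = ∑ k ∈ Finset.range (m+1+1+1), Bco α m k * ((x-1)/2) ^ k := by
    unfold jacobi Bco
    refine Finset.sum_congr (by rw [show m+2+1 = m+1+1+1 by omega]) fun k _ => ?_
    rw [show ((m+2 : ℕ) : ℝ) + α + α + 1 = (m : ℝ) + 2*α + 3 by push_cast; ring]
  have hC : jacobi (α+2) (α+2) m x
      = ∑ j ∈ Finset.range (m+1), Cco α m j * ((x-1)/2) ^ j := by
    unfold jacobi Cco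
    refine Finset.sum_congr rfl fun j _ => ?_
    rw [show ((m : ℕ) : ℝ) + (α+2) + (α+2) + 1 = (m : ℝ) + 2*α + 5 by ring,
        show α + 2 + (j : ℝ) + 1 = α + (j : ℝ) + 3 by ring]
  rw [hA, hB, hC]
  set y := (x-1)/2 with hy
  clear_value y
  have hf : ∀ j : ℕ, ((j.factorial : ℕ) : ℝ) ≠ 0 :=
    fun j => Nat.cast_ne_zero.mpr (Nat.factorial_ne_zero j)
  have hx2 : 1 - x^2 = -(4*(y^2+y)) := by rw [hy]; ring
  have hshift1 : ∑ k ∈ Finset.range (m+1+1+1),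
      (if 1 ≤ k ∧ k ≤ m+1 then Cco α m (k-1) * y^k else 0)
      = ∑ j ∈ Finset.range (m+1), Cco α m j * y^(j+1) := by
    rw [Finset.sum_range_succ, Finset.sum_range_succ']
    have e1 : ¬(1 ≤ m+1+1 ∧ m+1+1 ≤ m+1) := by omega
    have e0 : ¬((1:ℕ) ≤ 0 ∧ (0:ℕ) ≤ m+1) := by omega
    rw [if_neg e1, if_neg e0, add_zero, add_zero]
    refine Finset.sum_congr rfl fun j hj => ?_
    have hj' : j < m+1 := Finset.mem_range.mp hj
    have cj : 1 ≤ j+1 ∧ j+1 ≤ m+1 := by omega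
    rw [if_pos cj, show j+1-1 = j from rfl]
  have hshift2 : ∑ k ∈ Finset.range (m+1+1+1),
      (if 2 ≤ k then Cco α m (k-2) * y^k else 0)
      = ∑ j ∈ Finset.range (m+1), Cco α m j * y^(j+1+1) := by
    rw [Finset.sum_range_succ', Finset.sum_range_succ']
    have e1 : ¬(2 ≤ 0+1) := by omega
    have e0 : ¬((2:ℕ) ≤ 0) := by omega
    rw [if_neg e1, if_neg e0, add_zero, add_zero]
    refine Finset.sum_congr rfl fun j hj => ?_
    have cj : 2 ≤ j+1+1 := by omega
    rw [if_pos cj, show j+1+1-2 = j from rfl]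
  have hterm : ∀ k ∈ Finset.range (m+1+1+1),
      (α+1) * (Aco α m k * y^k) - (((m+2 : ℕ) : ℝ) + α + 1) * (Bco α m k * y^k)
        + (((m+2 : ℕ) : ℝ) + α + 1) *
          ((if 1 ≤ k ∧ k ≤ m+1 then Cco α m (k-1) * y^k else 0)
            + (if 2 ≤ k then Cco α m (k-2) * y^k else 0)) = 0 := by
    intro k hk
    have hk2 : k < m+1+1+1 := Finset.mem_range.mp hk
    rcases Nat.lt_or_ge k 2 with h2 | h2
    · interval_cases k
      · -- k = 0
        have e1 : ¬((1:ℕ) ≤ 0 ∧ (0:ℕ) ≤ m+1) := by omega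
        have e0 : ¬((2:ℕ) ≤ 0) := by omega
        rw [if_neg e1, if_neg e0]
        simp only [Aco, Bco]
        rw [show m+2-0 = m+1+1 from rfl]
        simp only [poch_zero]
        rw [poch_tr (α+((0:ℕ):ℝ)+2) m, poch_tl (α+((0:ℕ):ℝ)+1) m]
        rw [show α+((0:ℕ):ℝ)+1+1+1 = α+((0:ℕ):ℝ)+2+1 by ring]
        push_cast
        field_simp [hf]
        ring
      · -- k = 1
        have c1 : (1:ℕ) ≤ 1 ∧ (1:ℕ) ≤ m+1 := by omega
        have e0 : ¬((2:ℕ) ≤ 1) := by omega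
        rw [if_pos c1, if_neg e0, show 1-1 = 0 from rfl]
        simp only [Aco, Bco, Cco]
        rw [show m+2-1 = m+1 from rfl, show m-0 = m from rfl]
        simp only [poch_zero, poch_one_eq]
        rw [poch_s (α+((1:ℕ):ℝ)+2) m, poch_s' (α+((1:ℕ):ℝ)+1) m]
        rw [show α+((1:ℕ):ℝ)+1+1 = α+((1:ℕ):ℝ)+2 by ring,
            show α+((0:ℕ):ℝ)+3 = α+((1:ℕ):ℝ)+2 by push_cast; ring]
        simp only [factc, Nat.factorial_zero, Nat.factorial_one]
        push_cast
        field_simp [hf]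
        ring
    · obtain ⟨i, rfl⟩ : ∃ i, k = i+1+1 := ⟨k-2, by omega⟩
      have hi2 : i ≤ m := by omega
      obtain hc | hc | ⟨u, hm⟩ : m = i ∨ m = i+1 ∨ ∃ u, m = i+u+2 := by
        rcases le_or_gt (i+2) m with h | h
        · exact .inr (.inr ⟨m-i-2, by omega⟩)
        · have : m = i ∨ m = i+1 := by omega
          exact this.elim .inl (fun h => .inr (.inl h))
      · -- k = m+2
        have hmr : ((m : ℕ) : ℝ) = (i : ℝ) := by rw [hc]
        have e1 : ¬(1 ≤ i+1+1 ∧ i+1+1 ≤ m+1) := by omega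
        have c2 : 2 ≤ i+1+1 := by omega
        rw [if_neg e1, if_pos c2, show i+1+1-2 = i from rfl]
        simp only [Aco, Bco, Cco]
        rw [show m+2-(i+1+1) = 0 from by omega, show m-i = 0 from by omega]
        simp only [poch_zero]
        rw [poch_two ((m:ℝ)+2*α+5) i, poch_tl ((m:ℝ)+2*α+3) i]
        rw [show (m:ℝ)+2*α+3+1+1 = (m:ℝ)+2*α+5 by ring]
        simp only [factc, Nat.factorial_zero]
        push_cast
        rw [hmr]
        field_simp [hf]
        ring
      · -- k = m+1
        have hmr : ((m : ℕ) : ℝ) = (i : ℝ) + 1 := by rw [hc]; push_cast; ring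
        have c1 : 1 ≤ i+1+1 ∧ i+1+1 ≤ m+1 := by omega
        have c2 : 2 ≤ i+1+1 := by omega
        rw [if_pos c1, if_pos c2, show i+1+1-1 = i+1 from rfl,
            show i+1+1-2 = i from rfl]
        simp only [Aco, Bco, Cco]
        rw [show m+2-(i+1+1) = 1 from by omega, show m-(i+1) = 0 from by omega,
            show m-i = 1 from by omega]
        simp only [poch_zero, poch_one_eq]
        rw [poch_two ((m:ℝ)+2*α+5) i, poch_tl ((m:ℝ)+2*α+3) i,
            poch_s ((m:ℝ)+2*α+5) i]
        rw [show (m:ℝ)+2*α+3+1+1 = (m:ℝ)+2*α+5 by ring]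
        simp only [factc, Nat.factorial_zero, Nat.factorial_one]
        push_cast
        rw [hmr]
        field_simp [hf]
        ring
      · -- interior
        have hmr : ((m : ℕ) : ℝ) = (i : ℝ) + (u : ℝ) + 2 := by rw [hm]; push_cast; ring
        have c1 : 1 ≤ i+1+1 ∧ i+1+1 ≤ m+1 := by omega
        have c2 : 2 ≤ i+1+1 := by omega
        rw [if_pos c1, if_pos c2, show i+1+1-1 = i+1 from rfl,
            show i+1+1-2 = i from rfl]
        simp only [Aco, Bco, Cco]
        rw [show m+2-(i+1+1) = u+1+1 from by omega, show m-(i+1) = u+1 from by omega,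
            show m-i = u+1+1 from by omega]
        rw [poch_two ((m:ℝ)+2*α+5) i, poch_tl ((m:ℝ)+2*α+3) i, poch_s ((m:ℝ)+2*α+5) i]
        rw [poch_tr (α+((i+1+1:ℕ):ℝ)+2) u, poch_tl (α+((i+1+1:ℕ):ℝ)+1) u,
            poch_s' (α+((i+1:ℕ):ℝ)+3) u, poch_tl (α+((i:ℕ):ℝ)+3) u]
        rw [show (m:ℝ)+2*α+3+1+1 = (m:ℝ)+2*α+5 by ring,
            show α+((i+1+1:ℕ):ℝ)+2+1 = α+((i:ℕ):ℝ)+5 by push_cast; ring,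
            show α+((i+1+1:ℕ):ℝ)+1+1+1 = α+((i:ℕ):ℝ)+5 by push_cast; ring,
            show α+((i+1:ℕ):ℝ)+3+1 = α+((i:ℕ):ℝ)+5 by push_cast; ring,
            show α+((i:ℕ):ℝ)+3+1+1 = α+((i:ℕ):ℝ)+5 by ring]
        simp only [factc]
        push_cast
        rw [hmr]
        field_simp [hf]
        ring
  have hmain : ∑ k ∈ Finset.range (m+1+1+1),
      ((α+1) * (Aco α m k * y^k) - (((m+2 : ℕ) : ℝ) + α + 1) * (Bco α m k * y^k)
        + (((m+2 : ℕ) : ℝ) + α + 1) *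
          ((if 1 ≤ k ∧ k ≤ m+1 then Cco α m (k-1) * y^k else 0)
            + (if 2 ≤ k then Cco α m (k-2) * y^k else 0))) = 0 :=
    Finset.sum_eq_zero hterm
  rw [Finset.sum_add_distrib, Finset.sum_sub_distrib, ← Finset.mul_sum, ← Finset.mul_sum,
      ← Finset.mul_sum, Finset.sum_add_distrib, hshift1, hshift2] at hmain
  have hR : 1/4 * (((m+2 : ℕ) : ℝ) + α + 1) * (1-x^2) *
        (∑ j ∈ Finset.range (m+1), Cco α m j * y^j)
      = -((((m+2 : ℕ) : ℝ) + α + 1) *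
          ((∑ j ∈ Finset.range (m+1), Cco α m j * y^(j+1))
            + (∑ j ∈ Finset.range (m+1), Cco α m j * y^(j+1+1)))) := by
    calc 1/4 * (((m+2 : ℕ) : ℝ) + α + 1) * (1-x^2) *
          (∑ j ∈ Finset.range (m+1), Cco α m j * y^j)
        = ∑ j ∈ Finset.range (m+1),
            (1/4 * (((m+2 : ℕ) : ℝ) + α + 1) * (1-x^2)) * (Cco α m j * y^j) := by
          rw [Finset.mul_sum]
      _ = ∑ j ∈ Finset.range (m+1),
            -((((m+2 : ℕ) : ℝ) + α + 1) * (Cco α m j * y^(j+1))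
              + (((m+2 : ℕ) : ℝ) + α + 1) * (Cco α m j * y^(j+1+1))) :=
          Finset.sum_congr rfl fun j _ => by rw [hx2]; ring
      _ = -((((m+2 : ℕ) : ℝ) + α + 1) *
            ((∑ j ∈ Finset.range (m+1), Cco α m j * y^(j+1))
              + (∑ j ∈ Finset.range (m+1), Cco α m j * y^(j+1+1)))) := by
          rw [Finset.sum_neg_distrib, Finset.sum_add_distrib, ← Finset.mul_sum,
              ← Finset.mul_sum, ← mul_add]
  rw [hR]
  linarith [hmain]
end
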